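/- arXiv:1709.00664 — 6 statements merged into one kernel-verified Lean document; each statement's English description precedes it below -/
import Mathlib

section
/- If Z is a Gamma-distributed random variable with shape parameter T (a positive integer) and scale 1, then its CDF F_Z satisfies (1 - e^{-a z})^T ≤ F_Z(z) ≤ (1 - e^{-z})^T for all z ≥ 0, where a = (T!)^{-1/T}. -/
open MeasureTheory Real Filter Set

namespace AlzerAux

/-- monotone on `[0,∞)` from a global derivative bound -/
lemma mono_of_deriv (f f' : ℝ → ℝ) (h : ∀ x, HasDerivAt f (f' x) x)
    (h0 : ∀ x, 0 ≤ x → 0 ≤ f' x) {x y : ℝ} (hx : 0 ≤ x) (hxy : x ≤ y) : f x ≤ f y := by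
  have hmono : MonotoneOn f (Ici 0) :=
    monotoneOn_of_deriv_nonneg (convex_Ici 0)
      (fun t _ => (h t).continuousAt.continuousWithinAt)
      (fun t _ => (h t).differentiableAt.differentiableWithinAt)
      (fun t ht => by
        rw [(h t).deriv]
        exact h0 t (le_of_lt (by simpa [interior_Ici] using ht)))
  exact hmono hx (le_trans hx hxy) hxy

lemma exp_quad {y : ℝ} (hy : 0 ≤ y) : Real.exp (-y) ≤ 1 - y + y ^ 2 / 2 := by
  have h := mono_of_deriv (fun t => 1 - t + t ^ 2 / 2 - Real.exp (-t))
    (fun t => -1 + t + Real.exp (-t))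
    (fun t => by
      have he : HasDerivAt (fun s : ℝ => Real.exp (-s)) (Real.exp (-t) * (-1)) t :=
        (hasDerivAt_neg t).exp
      have h1 : HasDerivAt (fun s : ℝ => 1 - s + s ^ 2 / 2) (-1 + t) t := by
        have := ((hasDerivAt_id t).const_sub 1).add ((hasDerivAt_pow 2 t).div_const 2)
        exact this.congr_deriv (by push_cast; ring)
      exact (h1.sub he).congr_deriv (by ring))
    (fun t _ => by
      show 0 ≤ -1 + t + Real.exp (-t)
      have := Real.add_one_le_exp (-t); linarith)
    le_rfl hy
  simp at h
  linarith

lemma one_sub_exp_le {y : ℝ} : 1 - Real.exp (-y) ≤ y := by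
  nlinarith [Real.add_one_le_exp (-y)]

lemma exp_neg_lt_one {z : ℝ} (hz : 0 < z) : Real.exp (-z) < 1 :=
  Real.exp_lt_one_iff.mpr (by linarith)

/-- concavity of `1 - e^{-·}` through the origin -/
lemma conc_exp {x y : ℝ} (hx : 0 < x) (hxy : x ≤ y) :
    x * (1 - Real.exp (-y)) ≤ y * (1 - Real.exp (-x)) := by
  have hy : 0 < y := lt_of_lt_of_le hx hxy
  have ht1 : 0 ≤ x / y := by positivity
  have ht2 : 0 ≤ 1 - x / y := by
    rw [sub_nonneg, div_le_one hy]; exact hxy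
  have h := convexOn_exp.2 (mem_univ (-y)) (mem_univ (0:ℝ)) ht1 ht2 (by ring)
  simp only [smul_eq_mul, mul_zero, add_zero, Real.exp_zero] at h
  have hxy' : x / y * -y = -x := by field_simp
  rw [hxy'] at h
  have h2 := mul_le_mul_of_nonneg_left h (le_of_lt hy)
  have h3 : y * (x / y * Real.exp (-y) + (1 - x / y) * 1) = x * Real.exp (-y) + y - x := by
    field_simp; ring
  rw [h3] at h2
  nlinarith

end AlzerAux

namespace AlzerAux2

noncomputable def g : ℝ → ℝ := fun z => Real.log z - Real.log (1 - Real.exp (-z))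

noncomputable def q : ℝ → ℝ := fun z =>
  Real.log z - Real.log (1 - Real.exp (-z)) - 1 + z * Real.exp (-z) / (1 - Real.exp (-z))

lemma exp_neg_lt_one' {z : ℝ} (hz : 0 < z) : Real.exp (-z) < 1 :=
  Real.exp_lt_one_iff.mpr (by linarith)

lemma one_sub_pos {z : ℝ} (hz : 0 < z) : 0 < 1 - Real.exp (-z) := by
  have := exp_neg_lt_one' hz; linarith

lemma hasDerivAt_one_sub_exp (z : ℝ) :
    HasDerivAt (fun t : ℝ => 1 - Real.exp (-t)) (Real.exp (-z)) z := by
  have := ((hasDerivAt_neg z).exp).const_sub 1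
  simpa using this

lemma hasDerivAt_g {z : ℝ} (hz : 0 < z) :
    HasDerivAt g (z⁻¹ - Real.exp (-z) / (1 - Real.exp (-z))) z := by
  have h1 := Real.hasDerivAt_log (ne_of_gt hz)
  have h2 := (hasDerivAt_one_sub_exp z).log (ne_of_gt (one_sub_pos hz))
  exact h1.sub h2

lemma hasDerivAt_q {z : ℝ} (hz : 0 < z) :
    HasDerivAt q (z⁻¹ - z * Real.exp (-z) / (1 - Real.exp (-z)) ^ 2) z := by
  have hne := ne_of_gt (one_sub_pos hz)
  have he : HasDerivAt (fun t : ℝ => Real.exp (-t)) (Real.exp (-z) * (-1)) z :=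
    (hasDerivAt_neg z).exp
  have hnum : HasDerivAt (fun t : ℝ => t * Real.exp (-t))
      (1 * Real.exp (-z) + z * (Real.exp (-z) * (-1))) z := (hasDerivAt_id z).mul he
  have hfrac := hnum.div (hasDerivAt_one_sub_exp z) hne
  have h1 := Real.hasDerivAt_log (ne_of_gt hz)
  have h2 := (hasDerivAt_one_sub_exp z).log hne
  have h := ((h1.sub h2).sub_const 1).add hfrac
  refine h.congr_deriv ?_
  have hE := Real.exp_pos (-z)
  field_simp
  ring

lemma q_deriv_nonneg {z : ℝ} (hz : 0 < z) :
    0 ≤ z⁻¹ - z * Real.exp (-z) / (1 - Real.exp (-z)) ^ 2 := by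
  have hhalf : (0:ℝ) < z / 2 := by linarith
  have hs : z / 2 < Real.sinh (z / 2) := Real.self_lt_sinh_iff.mpr hhalf
  rw [Real.sinh_eq] at hs
  have hmul : Real.exp (z / 2) * Real.exp (-(z / 2)) = 1 := by
    rw [← Real.exp_add]; norm_num
  have hsq : Real.exp (-(z / 2)) * Real.exp (-(z / 2)) = Real.exp (-z) := by
    rw [← Real.exp_add]; ring_nf
  have hkey : z * Real.exp (-(z / 2)) ≤ 1 - Real.exp (-z) := by
    have := mul_le_mul_of_nonneg_right (le_of_lt hs) (Real.exp_pos (-(z/2))).le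
    nlinarith [Real.exp_pos (-(z/2))]
  have h2 : z ^ 2 * Real.exp (-z) ≤ (1 - Real.exp (-z)) ^ 2 := by
    nlinarith [hkey, Real.exp_pos (-(z/2)), mul_pos hz (Real.exp_pos (-(z/2)))]
  have hpos2 : (0:ℝ) < (1 - Real.exp (-z)) ^ 2 := pow_pos (one_sub_pos hz) 2
  have h3 : z * Real.exp (-z) / (1 - Real.exp (-z)) ^ 2 ≤ z⁻¹ := by
    rw [div_le_iff₀ hpos2, inv_mul_eq_div, le_div_iff₀ hz]
    nlinarith
  linarith

lemma q_mono : MonotoneOn q (Ioi (0:ℝ)) := by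
  apply monotoneOn_of_deriv_nonneg (convex_Ioi 0)
  · exact fun t ht => (hasDerivAt_q ht).continuousAt.continuousWithinAt
  · rw [interior_Ioi]
    exact fun t ht => (hasDerivAt_q ht).differentiableAt.differentiableWithinAt
  · rw [interior_Ioi]
    intro t ht
    rw [(hasDerivAt_q ht).deriv]
    exact q_deriv_nonneg ht

lemma r_tendsto : Tendsto (fun z : ℝ => z / (1 - Real.exp (-z))) (nhdsWithin 0 (Ioi 0)) (nhds 1) := by
  apply tendsto_of_tendsto_of_tendsto_of_le_of_le' (g := fun _ : ℝ => (1:ℝ))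
      (h := fun z : ℝ => (1 - z / 2)⁻¹)
  · exact tendsto_const_nhds
  · have hc : ContinuousAt (fun z : ℝ => (1 - z / 2)⁻¹) 0 := by
      apply ContinuousAt.inv₀
      · fun_prop
      · norm_num
    have := hc.tendsto.mono_left (nhdsWithin_le_nhds (s := Ioi (0:ℝ)))
    simpa using this
  · filter_upwards [self_mem_nhdsWithin] with z hz
    have hz' : (0:ℝ) < z := hz
    rw [le_div_iff₀ (one_sub_pos hz')]
    have := AlzerAux.one_sub_exp_le (y := z)
    linarith
  · filter_upwards [Ioo_mem_nhdsGT_of_mem (⟨le_rfl, one_pos⟩ : (0:ℝ) ∈ Ico 0 1)] with z hz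
    have hz0 : (0:ℝ) < z := hz.1
    have hz1 : z < 1 := hz.2
    have hhalf : (0:ℝ) < 1 - z / 2 := by linarith
    rw [div_le_iff₀ (one_sub_pos hz0), inv_mul_eq_div, le_div_iff₀ hhalf]
    have := AlzerAux.exp_quad hz0.le
    nlinarith

lemma q_tendsto : Tendsto q (nhdsWithin 0 (Ioi 0)) (nhds 0) := by
  have heq : ∀ z ∈ Ioi (0:ℝ), q z =
      Real.log (z / (1 - Real.exp (-z))) + (z / (1 - Real.exp (-z))) * Real.exp (-z) - 1 := by
    intro z hz
    have hz' : (0:ℝ) < z := hz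
    have h1 := one_sub_pos hz'
    unfold q
    rw [Real.log_div (ne_of_gt hz') (ne_of_gt h1)]
    ring
  have hlog : Tendsto (fun z : ℝ => Real.log (z / (1 - Real.exp (-z))))
      (nhdsWithin 0 (Ioi 0)) (nhds 0) := by
    have := ((Real.continuousAt_log one_ne_zero).tendsto).comp r_tendsto
    simpa [Function.comp_def] using this
  have hexp : Tendsto (fun z : ℝ => Real.exp (-z)) (nhdsWithin 0 (Ioi 0)) (nhds 1) := by
    have : ContinuousAt (fun z : ℝ => Real.exp (-z)) 0 := by fun_prop
    have := this.tendsto.mono_left (nhdsWithin_le_nhds (s := Ioi (0:ℝ)))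
    simpa using this
  have hmul := r_tendsto.mul hexp
  have hsum := (hlog.add hmul).sub_const 1
  have : (0:ℝ) + 1 * 1 - 1 = 0 := by norm_num
  rw [this] at hsum
  apply hsum.congr'
  filter_upwards [self_mem_nhdsWithin] with z hz
  exact (heq z hz).symm

lemma q_nonneg {z : ℝ} (hz : 0 < z) : 0 ≤ q z := by
  apply le_of_tendsto q_tendsto
  filter_upwards [Ioc_mem_nhdsGT_of_mem (⟨le_rfl, hz⟩ : (0:ℝ) ∈ Ico 0 z)] with w hw
  exact q_mono (hw.1 : w ∈ Ioi (0:ℝ)) hz hw.2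

lemma h_anti : AntitoneOn (fun z => g z / z) (Ioi (0:ℝ)) := by
  apply antitoneOn_of_deriv_nonpos (convex_Ioi 0)
  · intro t ht
    have ht' : (0:ℝ) < t := ht
    exact ((hasDerivAt_g ht').div (hasDerivAt_id t) (ne_of_gt ht')).continuousAt.continuousWithinAt
  · rw [interior_Ioi]
    intro t ht
    exact ((hasDerivAt_g ht).div (hasDerivAt_id t) (ne_of_gt ht)).differentiableAt.differentiableWithinAt
  · rw [interior_Ioi]
    intro t ht
    have ht' : (0:ℝ) < t := ht
    have hdiv : HasDerivAt (fun z => g z / z)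
        (((t⁻¹ - Real.exp (-t) / (1 - Real.exp (-t))) * t - g t * 1) / t ^ 2) t :=
      (hasDerivAt_g ht').div (hasDerivAt_id t) (ne_of_gt ht')
    rw [hdiv.deriv]
    apply div_nonpos_of_nonpos_of_nonneg _ (sq_nonneg t)
    have hq := q_nonneg ht'
    have hqe : q t = g t - ((t⁻¹ - Real.exp (-t) / (1 - Real.exp (-t))) * t) := by
      unfold q g
      field_simp
      ring
    rw [hqe] at hq
    linarith

lemma K {x y : ℝ} (hx : 0 < x) (hxy : x ≤ y) : x * g y ≤ y * g x := by
  have hy : (0:ℝ) < y := lt_of_lt_of_le hx hxy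
  have := h_anti (hx : x ∈ Ioi (0:ℝ)) (hy : y ∈ Ioi (0:ℝ)) hxy
  rw [div_le_div_iff₀ hy hx] at this
  linarith

end AlzerAux2
namespace AlzerAux3

lemma main_aux (D D' φ : ℝ → ℝ)
    (hD : ∀ x, HasDerivAt D (D' x) x) (hD0 : D 0 = 0)
    (hlim : Tendsto D atTop (nhds 0))
    (hpos : ∀ x, 0 < x → 0 ≤ φ x → 0 ≤ D' x)
    (hneg : ∀ x, 0 < x → φ x < 0 → D' x ≤ 0)
    (hseg : ∀ x y, 0 < x → x ≤ y → φ x < 0 → φ y < 0)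
    {z : ℝ} (hz : 0 ≤ z) : 0 ≤ D z := by
  rcases eq_or_lt_of_le hz with h | hz0
  · rw [← h, hD0]
  by_cases hc : ∀ w, 0 < w → w ≤ z → 0 ≤ φ w
  · have hmono : MonotoneOn D (Icc 0 z) := by
      apply monotoneOn_of_deriv_nonneg (convex_Icc 0 z)
      · exact fun t _ => (hD t).continuousAt.continuousWithinAt
      · exact fun t _ => (hD t).differentiableAt.differentiableWithinAt
      · intro x hx
        rw [interior_Icc] at hx
        rw [(hD x).deriv]
        exact hpos x hx.1 (hc x hx.1 hx.2.le)
    have := hmono (⟨le_rfl, hz⟩ : (0:ℝ) ∈ Icc 0 z) (⟨hz, le_rfl⟩ : z ∈ Icc 0 z) hz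
    rwa [hD0] at this
  · push_neg at hc
    obtain ⟨w, hw0, hwz, hwneg⟩ := hc
    have hanti : AntitoneOn D (Ici z) := by
      apply antitoneOn_of_deriv_nonpos (convex_Ici z)
      · exact fun t _ => (hD t).continuousAt.continuousWithinAt
      · exact fun t _ => (hD t).differentiableAt.differentiableWithinAt
      · intro x hx
        rw [interior_Ici] at hx
        rw [(hD x).deriv]
        exact hneg x (hz0.trans hx) (hseg w x hw0 (hwz.trans (le_of_lt hx)) hwneg)
    refine le_of_tendsto hlim ?_
    filter_upwards [eventually_ge_atTop z] with y hy
    exact hanti (self_mem_Ici : z ∈ Ici z) hy hy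

end AlzerAux3

set_option maxHeartbeats 2000000 in
open AlzerAux AlzerAux2 AlzerAux3 in
/-- Alzer's inequality: if `Z ~ Γ(T,1)` with CDF `F`, then
`(1 - e^{-a z})^T ≤ F z ≤ (1 - e^{-z})^T` for `z ≥ 0`, where `a = (T!)^{-1/T}`. -/
theorem alzer_gamma_cdf_bounds (T : ℕ) (hT : 0 < T) (F : ℝ → ℝ)
    (hF : ∀ z : ℝ, F z =
      ∫ t in Set.Ioc (0:ℝ) z, t ^ (T - 1) * Real.exp (-t) / (Nat.factorial (T - 1) : ℝ))
    (a : ℝ) (ha : a = ((Nat.factorial T : ℝ)) ^ (-(1:ℝ) / T))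
    (z : ℝ) (hz : 0 ≤ z) :
    (1 - Real.exp (-(a * z))) ^ T ≤ F z ∧ F z ≤ (1 - Real.exp (-z)) ^ T := by
  obtain ⟨n, rfl⟩ : ∃ n, T = n + 1 := ⟨T - 1, (Nat.succ_pred_eq_of_pos hT).symm⟩
  have hfacpos : (0:ℝ) < ((n+1).factorial : ℝ) := by exact_mod_cast Nat.factorial_pos _
  have hnfac : (0:ℝ) < (Nat.factorial n : ℝ) := by exact_mod_cast Nat.factorial_pos n
  set S : ℝ → ℝ := fun t => ∑ k ∈ Finset.range (n+1), t ^ k / (Nat.factorial k : ℝ) with hS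
  set G : ℝ → ℝ := fun t => 1 - Real.exp (-t) * S t with hG
  have hSd : ∀ t : ℝ, HasDerivAt S (∑ k ∈ Finset.range n, t ^ k / (Nat.factorial k : ℝ)) t := by
    intro t
    have h1 : HasDerivAt S
        (∑ k ∈ Finset.range (n+1), ((k : ℝ) * t ^ (k-1) / (Nat.factorial k : ℝ))) t := by
      apply HasDerivAt.fun_sum
      intro k _
      exact (hasDerivAt_pow k t).div_const _
    convert h1 using 1
    rw [Finset.sum_range_succ']
    simp only [Nat.cast_zero, zero_mul, zero_div, add_zero]
    apply Finset.sum_congr rfl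
    intro i _
    rw [Nat.add_sub_cancel, Nat.factorial_succ]
    have hne : ((i:ℝ)+1) ≠ 0 := by positivity
    push_cast
    field_simp
  have hGd : ∀ t : ℝ, HasDerivAt G (t ^ n * Real.exp (-t) / (Nat.factorial n : ℝ)) t := by
    intro t
    have he : HasDerivAt (fun s : ℝ => Real.exp (-s)) (Real.exp (-t) * (-1)) t :=
      (hasDerivAt_neg t).exp
    have h := (he.mul (hSd t)).const_sub 1
    refine h.congr_deriv ?_
    have hsplit : S t = (∑ k ∈ Finset.range n, t ^ k / (Nat.factorial k : ℝ))
        + t ^ n / (Nat.factorial n : ℝ) := Finset.sum_range_succ _ n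
    rw [hsplit]
    field_simp
    ring
  have hG0 : G 0 = 0 := by
    have hS0 : S 0 = 1 := by
      show (∑ k ∈ Finset.range (n+1), (0:ℝ) ^ k / (Nat.factorial k : ℝ)) = 1
      rw [Finset.sum_eq_single 0]
      · norm_num
      · intro k _ hk
        rw [zero_pow hk, zero_div]
      · intro h; exact absurd (Finset.mem_range.mpr (Nat.succ_pos n)) h
    simp [hG, hS0]
  have hFeq : F z = G z := by
    rw [hF z]
    have hcont : Continuous fun t : ℝ => t ^ n * Real.exp (-t) / (Nat.factorial n : ℝ) := by
      fun_prop
    simp only [Nat.add_sub_cancel]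
    rw [← intervalIntegral.integral_of_le hz]
    rw [intervalIntegral.integral_eq_sub_of_hasDerivAt (fun t _ => hGd t)
      (hcont.intervalIntegrable 0 z), hG0, sub_zero]
  have hGlim : Filter.Tendsto G Filter.atTop (nhds 1) := by
    have h1 : Filter.Tendsto (fun t : ℝ => Real.exp (-t) * S t) Filter.atTop (nhds 0) := by
      have heq : (fun t : ℝ => Real.exp (-t) * S t)
          = fun t => ∑ k ∈ Finset.range (n+1), (t ^ k * Real.exp (-t)) / (Nat.factorial k : ℝ) := by
        funext t
        rw [hS, Finset.mul_sum]
        apply Finset.sum_congr rfl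
        intro k _
        ring
      rw [heq]
      have h2 := tendsto_finset_sum (Finset.range (n+1)) (fun k (_ : k ∈ Finset.range (n+1)) =>
        (Real.tendsto_pow_mul_exp_neg_atTop_nhds_zero k).div_const (Nat.factorial k : ℝ))
      simpa using h2
    have := (tendsto_const_nhds (x := (1:ℝ)) (f := Filter.atTop)).sub h1
    simpa using this
  have ha0 : 0 < a := by rw [ha]; exact Real.rpow_pos_of_pos hfacpos _
  have haT : a ^ (n+1) = ((Nat.factorial (n+1) : ℝ))⁻¹ := by
    rw [ha, ← Real.rpow_natCast (((n+1).factorial : ℝ) ^ (-(1:ℝ) / ((n+1:ℕ):ℝ))) (n+1),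
      ← Real.rpow_mul hfacpos.le]
    rw [show (-(1:ℝ) / ((n+1:ℕ):ℝ)) * ((n+1:ℕ):ℝ) = -1 by
      have : ((n+1:ℕ):ℝ) ≠ 0 := by positivity
      field_simp]
    exact Real.rpow_neg_one _
  have hfn : ((n+1).factorial : ℝ) = ((n:ℝ)+1) * (Nat.factorial n : ℝ) := by
    rw [Nat.factorial_succ]; push_cast; ring
  have hPd : ∀ b : ℝ, ∀ t : ℝ, HasDerivAt (fun s : ℝ => (1 - Real.exp (-(b*s)))^(n+1))
      (((n:ℝ)+1) * (1 - Real.exp (-(b*t)))^n * (b * Real.exp (-(b*t)))) t := by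
    intro b t
    have h1 : HasDerivAt (fun s : ℝ => -(b*s)) (-b) t := by
      exact (((hasDerivAt_id t).const_mul b).neg).congr_deriv (by ring)
    have h2 : HasDerivAt (fun s : ℝ => 1 - Real.exp (-(b*s))) (b * Real.exp (-(b*t))) t := by
      have := (h1.exp).const_sub 1
      exact this.congr_deriv (by ring)
    have h3 := h2.pow (n+1)
    simp only [Nat.add_sub_cancel, Nat.cast_add, Nat.cast_one] at h3
    exact h3
  have hEexp : Filter.Tendsto (fun t : ℝ => Real.exp (-t)) Filter.atTop (nhds 0) := by
    exact (Real.tendsto_exp_atBot.comp tendsto_neg_atTop_atBot).congr (fun t => rfl)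
  -- Upper bound
  have hub : F z ≤ (1 - Real.exp (-z)) ^ (n+1) := by
    set c : ℝ := ((Nat.factorial (n+1) : ℝ)) ^ ((n:ℝ)⁻¹) with hc
    have hc0 : 0 ≤ c := Real.rpow_nonneg hfacpos.le _
    have hcn : c ^ n = ((n+1).factorial : ℝ) := by
      rcases Nat.eq_zero_or_pos n with h0 | hn
      · subst h0; simp [hc]
      · rw [hc, ← Real.rpow_natCast (((n+1).factorial : ℝ) ^ ((n:ℝ)⁻¹)) n,
          ← Real.rpow_mul hfacpos.le,
          inv_mul_cancel₀ (by exact_mod_cast hn.ne' : (n:ℝ) ≠ 0), Real.rpow_one]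
    set Du : ℝ → ℝ := fun t => (1 - Real.exp (-t))^(n+1) - G t with hDu
    set Du' : ℝ → ℝ := fun t => ((n:ℝ)+1) * (1 - Real.exp (-t))^n * Real.exp (-t)
      - t ^ n * Real.exp (-t) / (Nat.factorial n : ℝ) with hDu'
    have hDud : ∀ t, HasDerivAt Du (Du' t) t := by
      intro t
      have h1 := hPd 1 t
      simp only [one_mul] at h1
      exact h1.sub (hGd t)
    have h0 : Du 0 = 0 := by simp [hDu, hG0]
    have hlimD : Filter.Tendsto Du Filter.atTop (nhds 0) := by
      have h1 : Filter.Tendsto (fun t : ℝ => (1 - Real.exp (-t))^(n+1)) Filter.atTop (nhds 1) := by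
        have := ((tendsto_const_nhds (x := (1:ℝ)) (f := Filter.atTop)).sub hEexp).pow (n+1)
        simpa using this
      have := h1.sub hGlim
      simpa using this
    have hpos : ∀ x, 0 < x → 0 ≤ c * (1 - Real.exp (-x)) - x → 0 ≤ Du' x := by
      intro x hx hφ
      have hu1 : Real.exp (-x) < 1 := AlzerAux.exp_neg_lt_one hx
      have hxle : x ≤ c * (1 - Real.exp (-x)) := by linarith
      have hp : x ^ n ≤ (c * (1 - Real.exp (-x)))^n := pow_le_pow_left₀ hx.le hxle n
      rw [mul_pow, hcn, hfn] at hp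
      have hE := Real.exp_pos (-x)
      simp only [hDu']
      rw [sub_nonneg, div_le_iff₀ hnfac]
      have h5 := mul_le_mul_of_nonneg_right hp hE.le
      nlinarith [h5]
    have hneg : ∀ x, 0 < x → c * (1 - Real.exp (-x)) - x < 0 → Du' x ≤ 0 := by
      intro x hx hφ
      have hu1 : Real.exp (-x) < 1 := AlzerAux.exp_neg_lt_one hx
      have hcu : 0 ≤ c * (1 - Real.exp (-x)) := mul_nonneg hc0 (by linarith)
      have hp : (c * (1 - Real.exp (-x)))^n ≤ x ^ n :=
        pow_le_pow_left₀ hcu (by linarith) n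
      rw [mul_pow, hcn, hfn] at hp
      have hE := Real.exp_pos (-x)
      simp only [hDu']
      rw [sub_nonpos, le_div_iff₀ hnfac]
      have h5 := mul_le_mul_of_nonneg_right hp hE.le
      nlinarith [h5]
    have hseg : ∀ x y, 0 < x → x ≤ y → c * (1 - Real.exp (-x)) - x < 0 →
        c * (1 - Real.exp (-y)) - y < 0 := by
      intro x y hx hxy hφx
      have hy : (0:ℝ) < y := lt_of_lt_of_le hx hxy
      have hconc := AlzerAux.conc_exp hx hxy
      have h1 : c * (x * (1 - Real.exp (-y))) ≤ c * (y * (1 - Real.exp (-x))) :=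
        mul_le_mul_of_nonneg_left hconc hc0
      have h2 : c * (1 - Real.exp (-x)) < x := by linarith
      have h3 : y * (c * (1 - Real.exp (-x))) < y * x := by
        exact mul_lt_mul_of_pos_left h2 hy
      nlinarith [h1, h3, hx]
    have key := AlzerAux3.main_aux Du Du' (fun t => c * (1 - Real.exp (-t)) - t)
      hDud h0 hlimD hpos hneg hseg hz
    rw [hFeq]
    simp only [hDu] at key
    linarith
  -- Lower bound
  have hlb : (1 - Real.exp (-(a * z))) ^ (n+1) ≤ F z := by
    set E : ℝ → ℝ := fun t => G t - (1 - Real.exp (-(a*t)))^(n+1) with hE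
    set E' : ℝ → ℝ := fun t => t ^ n * Real.exp (-t) / (Nat.factorial n : ℝ)
      - ((n:ℝ)+1) * (1 - Real.exp (-(a*t)))^n * (a * Real.exp (-(a*t))) with hE'
    have hEd : ∀ t, HasDerivAt E (E' t) t := fun t => (hGd t).sub (hPd a t)
    have h0 : E 0 = 0 := by simp [hE, hG0]
    have hlimE : Filter.Tendsto E Filter.atTop (nhds 0) := by
      have hea : Filter.Tendsto (fun t : ℝ => Real.exp (-(a*t))) Filter.atTop (nhds 0) := by
        have h1 : Filter.Tendsto (fun t : ℝ => a * t) Filter.atTop Filter.atTop :=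
          Filter.Tendsto.const_mul_atTop ha0 Filter.tendsto_id
        exact (Real.tendsto_exp_atBot.comp (tendsto_neg_atTop_atBot.comp h1)).congr
          (fun t => rfl)
      have h1 : Filter.Tendsto (fun t : ℝ => (1 - Real.exp (-(a*t)))^(n+1))
          Filter.atTop (nhds 1) := by
        have := ((tendsto_const_nhds (x := (1:ℝ)) (f := Filter.atTop)).sub hea).pow (n+1)
        simpa using this
      have := hGlim.sub h1
      simpa using this
    have hane : a ≠ 0 := ne_of_gt ha0
    have hfac2 : ((n:ℝ)+1) * (Nat.factorial n : ℝ) * (a ^ n * a) = 1 := by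
      have h1 : a ^ n * a = ((Nat.factorial (n+1) : ℝ))⁻¹ := by
        rw [← pow_succ]; exact haT
      rw [h1, hfn]
      field_simp
    have hfact : ∀ t : ℝ, E' t * (a ^ n * (Nat.factorial n : ℝ))
        = Real.exp (-(a*t)) * ((a*t)^n * Real.exp ((a-1)*t) - (1 - Real.exp (-(a*t)))^n) := by
      intro t
      have hxp : Real.exp (-(a*t)) * Real.exp ((a-1)*t) = Real.exp (-t) := by
        rw [← Real.exp_add]; ring_nf
      simp only [hE']
      rw [mul_pow]
      have hinv : (Nat.factorial n : ℝ) * (Nat.factorial n : ℝ)⁻¹ = 1 := mul_inv_cancel₀ hnfac.ne'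
      linear_combination (-(a^n * t^n)) * hxp
        - (Real.exp (-(a*t)) * (1 - Real.exp (-(a*t)))^n) * hfac2 + (t^n * Real.exp (-t) * a^n) * hinv
    have hC : (0:ℝ) < a ^ n * (Nat.factorial n : ℝ) := by positivity
    have hpos : ∀ x, 0 < x →
        0 ≤ (n:ℝ) * AlzerAux2.g (a*x) - (1-a)*x → 0 ≤ E' x := by
      intro x hx hψ
      have haz : 0 < a * x := mul_pos ha0 hx
      have hm : 0 < 1 - Real.exp (-(a*x)) := AlzerAux2.one_sub_pos haz
      have hlog : (n:ℝ) * Real.log (1 - Real.exp (-(a*x)))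
          ≤ (n:ℝ) * Real.log (a*x) + (a-1)*x := by
        have : AlzerAux2.g (a*x)
            = Real.log (a*x) - Real.log (1 - Real.exp (-(a*x))) := rfl
        rw [this] at hψ
        linarith
      have hexp := Real.exp_le_exp.mpr hlog
      rw [Real.exp_add, Real.exp_nat_mul, Real.exp_nat_mul, Real.exp_log haz,
        Real.exp_log hm] at hexp
      have h5 : 0 ≤ E' x * (a ^ n * (Nat.factorial n : ℝ)) := by
        rw [hfact x]
        exact mul_nonneg (Real.exp_pos _).le (by linarith)
      exact (mul_nonneg_iff_of_pos_right hC).1 h5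
    have hneg : ∀ x, 0 < x →
        (n:ℝ) * AlzerAux2.g (a*x) - (1-a)*x < 0 → E' x ≤ 0 := by
      intro x hx hψ
      have haz : 0 < a * x := mul_pos ha0 hx
      have hm : 0 < 1 - Real.exp (-(a*x)) := AlzerAux2.one_sub_pos haz
      have hlog : (n:ℝ) * Real.log (a*x) + (a-1)*x
          ≤ (n:ℝ) * Real.log (1 - Real.exp (-(a*x))) := by
        have : AlzerAux2.g (a*x)
            = Real.log (a*x) - Real.log (1 - Real.exp (-(a*x))) := rfl
        rw [this] at hψ
        linarith
      have hexp := Real.exp_le_exp.mpr hlog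
      rw [Real.exp_add, Real.exp_nat_mul, Real.exp_nat_mul, Real.exp_log haz,
        Real.exp_log hm] at hexp
      have h5 : E' x * (a ^ n * (Nat.factorial n : ℝ)) ≤ 0 := by
        rw [hfact x]
        exact mul_nonpos_of_nonneg_of_nonpos (Real.exp_pos _).le (by linarith)
      exact nonpos_of_mul_nonpos_left h5 hC
    have hseg : ∀ x y, 0 < x → x ≤ y →
        (n:ℝ) * AlzerAux2.g (a*x) - (1-a)*x < 0 →
        (n:ℝ) * AlzerAux2.g (a*y) - (1-a)*y < 0 := by
      intro x y hx hxy hψx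
      have hy : (0:ℝ) < y := lt_of_lt_of_le hx hxy
      have hK := AlzerAux2.K (mul_pos ha0 hx) (mul_le_mul_of_nonneg_left hxy ha0.le)
      have hK' : x * AlzerAux2.g (a*y) ≤ y * AlzerAux2.g (a*x) := by
        have h' : a * (x * AlzerAux2.g (a*y)) ≤ a * (y * AlzerAux2.g (a*x)) := by
          ring_nf
          ring_nf at hK
          linarith
        exact le_of_mul_le_mul_left h' ha0
      have h1 : (n:ℝ) * (x * AlzerAux2.g (a*y)) ≤ (n:ℝ) * (y * AlzerAux2.g (a*x)) :=
        mul_le_mul_of_nonneg_left hK' (by positivity)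
      have h2 : y * ((n:ℝ) * AlzerAux2.g (a*x) - (1-a)*x) < 0 :=
        mul_neg_of_pos_of_neg hy hψx
      nlinarith [h1, h2, hx]
    have key := AlzerAux3.main_aux E E'
      (fun t => (n:ℝ) * AlzerAux2.g (a*t) - (1-a)*t) hEd h0 hlimE hpos hneg hseg hz
    rw [hFeq]
    simp only [hE] at key
    linarith
  exact ⟨hlb, hub⟩
end

section
/- If X² ~ Beta(k, K-k), i.e., X has density f(x) = (2(K-1)!/((k-1)!(K-k-1)!)) x^{2k-1}(1-x²)^{K-k-1} on [0,1], then for any c ≥ 0, ∫_0^1 f(x)/(1+c x²)^K dx = (1+c)^{-k}. -/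
open intervalIntegral

lemma beta_nat (a b : ℕ) : ∫ x in (0:ℝ)..1, x ^ a * (1 - x) ^ b
    = (Nat.factorial a * Nat.factorial b) / Nat.factorial (a + b + 1) := by
  induction b generalizing a with
  | zero =>
    simp [integral_pow, Nat.factorial_succ]
    rw [eq_div_iff (by positivity)]
    field_simp
  | succ b ih =>
    have hderiv : ∀ x ∈ Set.uIcc (0:ℝ) 1, HasDerivAt
        (fun x : ℝ => x ^ (a+1) / (a+1) * (1 - x) ^ (b+1))
        (x ^ a * (1 - x) ^ (b+1) - (b+1) / (a+1) * (x ^ (a+1) * (1 - x) ^ b)) x := by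
      intro x _
      have h1 : HasDerivAt (fun x : ℝ => x ^ (a+1) / (a+1)) (x ^ a) x := by
        have := (hasDerivAt_pow (a+1) x).div_const ((a:ℝ)+1)
        refine this.congr_deriv ?_
        field_simp
        simp
      have h2 : HasDerivAt (fun x : ℝ => (1 - x) ^ (b+1)) (-((b+1) * (1 - x) ^ b)) x := by
        have h3 : HasDerivAt (fun x : ℝ => 1 - x) (-1) x := by
          simpa using (hasDerivAt_id x).const_sub (1:ℝ)
        have := (hasDerivAt_pow (b+1) (1 - x)).comp x h3
        refine this.congr_deriv ?_
        push_cast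
        ring
      have := h1.mul h2
      refine this.congr_deriv ?_
      have hane : ((a:ℝ)+1) ≠ 0 := by positivity
      field_simp
      ring
    have hint : (∫ x in (0:ℝ)..1,
        (x ^ a * (1 - x) ^ (b+1) - (b+1) / (a+1) * (x ^ (a+1) * (1 - x) ^ b))) = 0 := by
      rw [integral_eq_sub_of_hasDerivAt hderiv]
      · norm_num
      · apply Continuous.intervalIntegrable
        continuity
    have c1 : IntervalIntegrable (fun x : ℝ => x ^ a * (1 - x) ^ (b+1)) MeasureTheory.volume 0 1 :=
      (Continuous.intervalIntegrable (by continuity) _ _)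
    have c2 : IntervalIntegrable (fun x : ℝ => (b+1) / (a+1) * (x ^ (a+1) * (1 - x) ^ b)) MeasureTheory.volume 0 1 :=
      (Continuous.intervalIntegrable (by continuity) _ _)
    rw [integral_sub c1 c2] at hint
    have := sub_eq_zero.mp hint
    rw [this, integral_const_mul, ih (a+1)]
    have e1 : a + (b+1) + 1 = a+1+b+1 := by ring
    rw [e1, Nat.factorial_succ a, Nat.factorial_succ b]
    have h0 : (Nat.factorial (a+1+b+1) : ℝ) ≠ 0 := by positivity
    have h2 : ((a:ℝ)+1) ≠ 0 := by positivity
    push_cast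
    field_simp

lemma subst_sq {g : ℝ → ℝ} (hg : ContinuousOn g (Set.Icc 0 1)) :
    ∫ x in (0:ℝ)..1, (2 * x) * g (x ^ 2) = ∫ u in (0:ℝ)..1, g u := by
  have h := intervalIntegral.integral_comp_smul_deriv' (f := fun x : ℝ => x ^ 2)
    (f' := fun x : ℝ => 2 * x) (g := g) (a := 0) (b := 1)
    (fun x _ => by simpa using hasDerivAt_pow 2 x)
    (by fun_prop)
    (hg.mono (by
      rintro _ ⟨x, hx, rfl⟩
      rw [Set.uIcc_of_le (by norm_num)] at hx
      exact ⟨by positivity, pow_le_one₀ hx.1 hx.2⟩))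
  simpa using h

lemma subst_mobius {g : ℝ → ℝ} (hg : Continuous g) {c : ℝ} (hc : 0 ≤ c) :
    ∫ u in (0:ℝ)..1, ((1 + c) / (1 + c * u) ^ 2) * g ((1 + c) * u / (1 + c * u))
      = ∫ t in (0:ℝ)..1, g t := by
  have hc1 : (0:ℝ) < 1 + c := by linarith
  have h := intervalIntegral.integral_comp_smul_deriv
    (f := fun u : ℝ => (1 + c) * u / (1 + c * u))
    (f' := fun u : ℝ => (1 + c) / (1 + c * u) ^ 2) (g := g) (a := 0) (b := 1)
    (fun u hu => by
      rw [Set.uIcc_of_le (by norm_num)] at hu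
      have hd : (0:ℝ) < 1 + c * u := by nlinarith [hu.1]
      have h1 : HasDerivAt (fun u : ℝ => (1 + c) * u) (1 + c) u := by
        simpa using (hasDerivAt_id u).const_mul (1 + c)
      have h2 : HasDerivAt (fun u : ℝ => 1 + c * u) c u := by
        simpa using ((hasDerivAt_id u).const_mul c).const_add 1
      have := h1.div h2 hd.ne'
      refine this.congr_deriv ?_
      field_simp
      ring)
    (by
      apply ContinuousOn.div continuousOn_const
      · fun_prop
      · intro u hu
        rw [Set.uIcc_of_le (by norm_num)] at hu
        have : (0:ℝ) < 1 + c * u := by nlinarith [hu.1]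
        positivity)
    hg
  simpa [hc1.ne'] using h


/-- If `X² ~ Beta(k, K-k)`, then for `c ≥ 0`, `E[(1+cX²)^{-K}] = (1+c)^{-k}`. -/
theorem beta_ratio_integral (K k : ℕ) (hk : 1 ≤ k) (hkK : k ≤ K - 1) (hK : 2 ≤ K)
    (c : ℝ) (hc : 0 ≤ c) :
    (∫ x in (0:ℝ)..1,
        (2 * (Nat.factorial (K - 1) : ℝ) /
          ((Nat.factorial (k - 1) : ℝ) * (Nat.factorial (K - k - 1) : ℝ)) *
            x ^ (2 * k - 1) * (1 - x ^ 2) ^ (K - k - 1)) / (1 + c * x ^ 2) ^ K)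
      = 1 / (1 + c) ^ k := by
  obtain ⟨m, rfl⟩ : ∃ m, k = m + 1 := ⟨k - 1, (Nat.succ_pred_eq_of_pos hk).symm⟩
  obtain ⟨b, rfl⟩ : ∃ b, K = m + b + 2 := by
    refine ⟨K - m - 2, by omega⟩
  have e1 : 2 * (m + 1) - 1 = 2 * m + 1 := by omega
  have e2 : m + 1 - 1 = m := by omega
  have e3 : m + b + 2 - (m + 1) - 1 = b := by omega
  have e4 : m + b + 2 - 1 = m + 1 + b := by omega
  rw [e1, e2, e3, e4]
  set A : ℝ := 2 * (Nat.factorial (m + 1 + b) : ℝ) /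
      ((Nat.factorial m : ℝ) * (Nat.factorial b : ℝ)) with hA
  have hc1 : (0:ℝ) < 1 + c := by linarith
  set g1 : ℝ → ℝ := fun u => A / 2 * (u ^ m * (1 - u) ^ b * ((1 + c * u) ^ (m + b + 2))⁻¹)
    with hg1
  set g3 : ℝ → ℝ := fun t => ((1 + c) ^ (m + 1))⁻¹ * (A / 2 * (t ^ m * (1 - t) ^ b)) with hg3
  have step0 : (∫ x in (0:ℝ)..1,
        (A * x ^ (2 * m + 1) * (1 - x ^ 2) ^ b) / (1 + c * x ^ 2) ^ (m + b + 2))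
      = ∫ x in (0:ℝ)..1, (2 * x) * g1 (x ^ 2) := by
    apply intervalIntegral.integral_congr
    intro x hx
    have hD : (0:ℝ) < 1 + c * x ^ 2 := by positivity
    simp only [hg1]
    rw [div_eq_mul_inv]
    ring
  have hg1cont : ContinuousOn g1 (Set.Icc 0 1) := by
    apply ContinuousOn.mul continuousOn_const
    apply ContinuousOn.mul (by fun_prop)
    apply ContinuousOn.inv₀ (by fun_prop)
    intro u hu
    have : (0:ℝ) < 1 + c * u := by nlinarith [hu.1]
    positivity
  have step2 : (∫ u in (0:ℝ)..1, g1 u)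
      = ∫ u in (0:ℝ)..1, ((1 + c) / (1 + c * u) ^ 2) * g3 ((1 + c) * u / (1 + c * u)) := by
    apply intervalIntegral.integral_congr
    intro u hu
    rw [Set.uIcc_of_le (by norm_num)] at hu
    have hD : (0:ℝ) < 1 + c * u := by nlinarith [hu.1]
    simp only [hg1, hg3]
    rw [show (1:ℝ) - (1 + c) * u / (1 + c * u) = (1 - u) / (1 + c * u) by
      field_simp; ring]
    rw [div_pow, div_pow, mul_pow]
    field_simp
    ring
  have hg3cont : Continuous g3 := by fun_prop
  calc (∫ x in (0:ℝ)..1,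
        (A * x ^ (2 * m + 1) * (1 - x ^ 2) ^ b) / (1 + c * x ^ 2) ^ (m + b + 2))
      = ∫ x in (0:ℝ)..1, (2 * x) * g1 (x ^ 2) := step0
    _ = ∫ u in (0:ℝ)..1, g1 u := subst_sq hg1cont
    _ = ∫ u in (0:ℝ)..1, ((1 + c) / (1 + c * u) ^ 2) * g3 ((1 + c) * u / (1 + c * u)) := step2
    _ = ∫ t in (0:ℝ)..1, g3 t := subst_mobius hg3cont hc
    _ = ((1 + c) ^ (m + 1))⁻¹ * (A / 2 * ∫ t in (0:ℝ)..1, t ^ m * (1 - t) ^ b) := by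
        simp only [hg3]
        rw [intervalIntegral.integral_const_mul, intervalIntegral.integral_const_mul]
    _ = 1 / (1 + c) ^ (m + 1) := by
        rw [beta_nat m b]
        have e5 : m + b + 1 = m + 1 + b := by omega
        rw [e5, hA]
        have h1 : (Nat.factorial m : ℝ) ≠ 0 := by positivity
        have h2 : (Nat.factorial b : ℝ) ≠ 0 := by positivity
        have h3 : (Nat.factorial (m + 1 + b) : ℝ) ≠ 0 := by positivity
        field_simp
end

section
/- The function f(x) = Σ_{i=0}^{k-1} ((K-1)! / ((K-k+i)!(k-1-i)!)) x^{2(k-1-i)} (1-x²)^{K-k+i} on [0,1] satisfies f(0)=1, f(1)=0, and its derivative equals -(2(K-1)!/((k-1)!(K-k-1)!)) x^{2k-1}(1-x²)^{K-k-1}, i.e., 1-f is the CDF of the distance-ratio δ_k. -/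
open Polynomial

private lemma bern_deriv_sum (n m : ℕ) :
    Polynomial.derivative (∑ j ∈ Finset.range (m + 1), bernsteinPolynomial ℝ n j) =
      -(n : ℝ[X]) * bernsteinPolynomial ℝ (n - 1) m := by
  induction m with
  | zero => simpa using bernsteinPolynomial.derivative_zero ℝ n
  | succ m ih =>
    rw [Finset.sum_range_succ, Polynomial.derivative_add, ih,
      bernsteinPolynomial.derivative_succ]
    ring

/-- The complementary CDF of the distance ratio `δ_k`:
`f(x) = ∑_{i=0}^{k-1} ((K-1)!/((K-k+i)!(k-1-i)!)) x^{2(k-1-i)}(1-x²)^{K-k+i}` satisfies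
`f(0)=1`, `f(1)=0` and `f' (x) = -(2(K-1)!/((k-1)!(K-k-1)!)) x^{2k-1}(1-x²)^{K-k-1}`. -/
theorem distance_ratio_ccdf (K k : ℕ) (hk : 1 ≤ k) (hkK : k ≤ K - 1) (hK : 2 ≤ K)
    (f : ℝ → ℝ)
    (hf : ∀ x : ℝ, f x = ∑ i ∈ Finset.range k,
        (Nat.factorial (K - 1) : ℝ) /
          ((Nat.factorial (K - k + i) : ℝ) * (Nat.factorial (k - 1 - i) : ℝ)) *
            x ^ (2 * (k - 1 - i)) * (1 - x ^ 2) ^ (K - k + i)) :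
    f 0 = 1 ∧ f 1 = 0 ∧
      ∀ x : ℝ, deriv f x =
        -(2 * (Nat.factorial (K - 1) : ℝ) /
            ((Nat.factorial (k - 1) : ℝ) * (Nat.factorial (K - k - 1) : ℝ)) *
              x ^ (2 * k - 1) * (1 - x ^ 2) ^ (K - k - 1)) := by
  obtain ⟨a, rfl⟩ : ∃ a, k = a + 1 := ⟨k - 1, by omega⟩
  obtain ⟨b, rfl⟩ : ∃ b, K = a + b + 2 := ⟨K - a - 2, by omega⟩
  set n : ℕ := a + b + 1 with hn
  set P : ℝ[X] := ∑ j ∈ Finset.range (a + 1), bernsteinPolynomial ℝ n j with hP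
  have hfP : ∀ x : ℝ, f x = P.eval (x ^ 2) := by
    intro x
    rw [hf, hP, Polynomial.eval_finset_sum,
      ← Finset.sum_range_reflect (fun j => (bernsteinPolynomial ℝ n j).eval (x ^ 2)) (a + 1)]
    refine Finset.sum_congr rfl fun i hi => ?_
    simp only [Finset.mem_range] at hi
    have hia : i ≤ a := by omega
    have e1 : a + b + 2 - (a + 1) + i = n - (a - i) := by omega
    have e2 : a + 1 - 1 - i = a - i := by omega
    have e3 : a + 1 - 1 - i = a + 1 - 1 - i := rfl
    have e4 : a + b + 2 - 1 = n := by omega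
    rw [e1, e2, e4, bernsteinPolynomial, Polynomial.eval_mul, Polynomial.eval_mul,
      Polynomial.eval_pow, Polynomial.eval_pow, Polynomial.eval_sub, Polynomial.eval_one,
      Polynomial.eval_X, Polynomial.eval_natCast,
      Nat.cast_choose ℝ (show a - i ≤ n by omega), ← pow_mul]
    ring_nf
  have h01 : f 0 = 1 := by
    rw [hfP]
    simp [hP, Polynomial.eval_finset_sum, bernsteinPolynomial.eval_at_0]
  have h11 : f 1 = 0 := by
    rw [hfP, hP, Polynomial.eval_finset_sum]
    refine Finset.sum_eq_zero fun j hj => ?_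
    simp only [Finset.mem_range] at hj
    rw [one_pow, bernsteinPolynomial.eval_at_1, if_neg (by omega)]
  refine ⟨h01, h11, fun x => ?_⟩
  have h2 : HasDerivAt (fun y : ℝ => y ^ 2) (2 * x) x := by
    simpa using hasDerivAt_pow 2 x
  have hd : HasDerivAt f (P.derivative.eval (x ^ 2) * (2 * x)) x := by
    have := (P.hasDerivAt (x ^ 2)).comp x h2
    exact this.congr_of_eventuallyEq (Filter.Eventually.of_forall fun y => (hfP y))
  rw [hd.deriv, hP, bern_deriv_sum n a]
  have e4 : a + b + 2 - 1 = n := by omega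
  have e5 : a + 1 - 1 = a := by omega
  have e6 : a + b + 2 - (a + 1) - 1 = b := by omega
  have e7 : 2 * (a + 1) - 1 = 2 * a + 1 := by omega
  have e8 : n - 1 = a + b := by omega
  have e9 : a + b - a = b := by omega
  rw [e4, e5, e6, e7, e8, bernsteinPolynomial, e9]
  simp only [Polynomial.eval_mul, Polynomial.eval_neg, Polynomial.eval_pow,
    Polynomial.eval_sub, Polynomial.eval_one, Polynomial.eval_X, Polynomial.eval_natCast]
  rw [Nat.cast_choose ℝ (show a ≤ a + b by omega), e9, hn,
    show a + b + 1 = (a + b) + 1 from rfl, Nat.factorial_succ, ← pow_mul]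
  have ha : (Nat.factorial a : ℝ) ≠ 0 := Nat.cast_ne_zero.mpr (Nat.factorial_ne_zero a)
  have hb : (Nat.factorial b : ℝ) ≠ 0 := Nat.cast_ne_zero.mpr (Nat.factorial_ne_zero b)
  field_simp
  push_cast
  ring
end

section
/- Let P(1) ≥ P(2) ≥ … ≥ P(K) ≥ 0 and b ∈ [0,1]. Then Σ_{k=1}^K (k-1)(1-b)^{k-3}(kb-2) P(k) ≤ K(K-1)(1-b)^{K-3}(b-1) P(K) ≤ 0. -/
lemma stp_aux (b : ℝ) (hb1 : b < 1) (P : ℕ → ℝ) :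
    ∀ K, 1 ≤ K → (∀ k, 1 ≤ k → k < K → P (k + 1) ≤ P k) →
    (∑ k ∈ Finset.Icc 1 K,
        ((k : ℝ) - 1) * (1 - b) ^ ((k : ℤ) - 3) * ((k : ℝ) * b - 2) * P k)
      ≤ (K : ℝ) * ((K : ℝ) - 1) * (1 - b) ^ ((K : ℤ) - 3) * (b - 1) * P K := by
  have hpos : (0:ℝ) < 1 - b := by linarith
  have hne : (1 - b) ≠ 0 := ne_of_gt hpos
  intro K hK1
  induction K, hK1 using Nat.le_induction with
  | base =>
    intro
    simp
  | succ K hK ih =>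
    intro hmono
    have h1 : (1:ℕ) ≤ K + 1 := by omega
    rw [Finset.sum_Icc_succ_top h1]
    have ihm : ∀ k, 1 ≤ k → k < K → P (k + 1) ≤ P k := fun k hk hk' =>
      hmono k hk (by omega)
    have hsum := ih ihm
    have hSneg : (K : ℝ) * ((K : ℝ) - 1) * (1 - b) ^ ((K : ℤ) - 3) * (b - 1) ≤ 0 := by
      have hK1 : (1:ℝ) ≤ (K:ℝ) := by exact_mod_cast hK
      have hz : (0:ℝ) < (1 - b) ^ ((K : ℤ) - 3) := zpow_pos hpos _
      have h0 : (0:ℝ) ≤ (K : ℝ) * ((K : ℝ) - 1) * (1 - b) ^ ((K : ℤ) - 3) :=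
        mul_nonneg (mul_nonneg (by linarith) (by linarith)) hz.le
      exact mul_nonpos_of_nonneg_of_nonpos h0 (by linarith)
    have hmK : P (K + 1) ≤ P K := hmono K hK (by omega)
    have step1 : (K : ℝ) * ((K : ℝ) - 1) * (1 - b) ^ ((K : ℤ) - 3) * (b - 1) * P K
        ≤ (K : ℝ) * ((K : ℝ) - 1) * (1 - b) ^ ((K : ℤ) - 3) * (b - 1) * P (K + 1) :=
      mul_le_mul_of_nonpos_left hmK hSneg
    have hid : (K : ℝ) * ((K : ℝ) - 1) * (1 - b) ^ ((K : ℤ) - 3) * (b - 1)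
        + (((K + 1 : ℕ) : ℝ) - 1) * (1 - b) ^ (((K + 1 : ℕ) : ℤ) - 3) * (((K + 1 : ℕ) : ℝ) * b - 2)
        = ((K + 1 : ℕ) : ℝ) * (((K + 1 : ℕ) : ℝ) - 1) * (1 - b) ^ (((K + 1 : ℕ) : ℤ) - 3) * (b - 1) := by
      push_cast
      have e1 : ((K : ℤ) + 1) - 3 = ((K : ℤ) - 3) + 1 := by ring
      rw [e1, zpow_add_one₀ hne]
      ring
    calc (∑ k ∈ Finset.Icc 1 K,
          ((k : ℝ) - 1) * (1 - b) ^ ((k : ℤ) - 3) * ((k : ℝ) * b - 2) * P k)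
          + (((K + 1 : ℕ) : ℝ) - 1) * (1 - b) ^ (((K + 1 : ℕ) : ℤ) - 3) * (((K + 1 : ℕ) : ℝ) * b - 2) * P (K + 1)
        ≤ (K : ℝ) * ((K : ℝ) - 1) * (1 - b) ^ ((K : ℤ) - 3) * (b - 1) * P (K + 1)
          + (((K + 1 : ℕ) : ℝ) - 1) * (1 - b) ^ (((K + 1 : ℕ) : ℤ) - 3) * (((K + 1 : ℕ) : ℝ) * b - 2) * P (K + 1) := by
          linarith [le_trans hsum step1]
      _ = ((K + 1 : ℕ) : ℝ) * (((K + 1 : ℕ) : ℝ) - 1) * (1 - b) ^ (((K + 1 : ℕ) : ℤ) - 3) * (b - 1) * P (K + 1) := by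
          rw [← hid]; ring

/-- For `P(1) ≥ … ≥ P(K) ≥ 0` and `b ∈ [0,1)`, with `K ≥ 3`:
`∑_{k=1}^K (k-1)(1-b)^{k-3}(kb-2)P(k) ≤ K(K-1)(1-b)^{K-3}(b-1)P(K) ≤ 0`. -/
theorem stp_second_derivative_bound (K : ℕ) (hK : 3 ≤ K) (b : ℝ) (hb : b ∈ Set.Ico (0:ℝ) 1)
    (P : ℕ → ℝ) (hmono : ∀ k, 1 ≤ k → k < K → P (k + 1) ≤ P k)
    (hnonneg : 0 ≤ P K) :
    (∑ k ∈ Finset.Icc 1 K,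
        ((k : ℝ) - 1) * (1 - b) ^ ((k : ℤ) - 3) * ((k : ℝ) * b - 2) * P k)
      ≤ (K : ℝ) * ((K : ℝ) - 1) * (1 - b) ^ ((K : ℤ) - 3) * (b - 1) * P K ∧
    (K : ℝ) * ((K : ℝ) - 1) * (1 - b) ^ ((K : ℤ) - 3) * (b - 1) * P K ≤ 0 := by
  obtain ⟨hb0, hb1⟩ := hb
  have hpos : (0:ℝ) < 1 - b := by linarith
  refine ⟨stp_aux b hb1 P K (by omega) hmono, ?_⟩
  have hK1 : (1:ℝ) ≤ (K:ℝ) := by exact_mod_cast (by omega : 1 ≤ K)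
  have hS : (K : ℝ) * ((K : ℝ) - 1) * (1 - b) ^ ((K : ℤ) - 3) * (b - 1) ≤ 0 := by
    have hz : (0:ℝ) < (1 - b) ^ ((K : ℤ) - 3) := zpow_pos hpos _
    have h0 : (0:ℝ) ≤ (K : ℝ) * ((K : ℝ) - 1) * (1 - b) ^ ((K : ℤ) - 3) :=
      mul_nonneg (mul_nonneg (by linarith) (by linarith)) hz.le
    exact mul_nonpos_of_nonneg_of_nonpos h0 (by linarith)
  exact mul_nonpos_of_nonpos_of_nonneg hS hnonneg
end

section
/- For K ≥ 1 and P(1) ≥ … ≥ P(K) ≥ 0 with P(1) > 0, the function g(b) = Σ_{k=1}^K (1-b)^{k-2}(1-kb) P(k) is non-increasing on [0,1], g(0) = Σ_{k=1}^K P(k), and g(1) = P(1) - P(2) (for K ≥ 2). -/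
private lemma key_identity (b : ℝ) (P : ℕ → ℝ) :
    ∀ K : ℕ, 1 ≤ K →
      ∑ k ∈ Finset.Icc 1 K, ((1 - b) ^ (k - 1) - b * ((k : ℝ) - 1) * (1 - b) ^ (k - 2)) * P k
        = (K : ℝ) * (1 - b) ^ (K - 1) * P K
          + ∑ k ∈ Finset.Icc 2 K, ((k : ℝ) - 1) * (1 - b) ^ (k - 2) * (P (k - 1) - P k) := by
  intro K hK
  induction K, hK using Nat.le_induction with
  | base => simp
  | succ n hn ih =>
    rw [Finset.sum_Icc_succ_top (by omega : 1 ≤ n + 1),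
        Finset.sum_Icc_succ_top (by omega : 2 ≤ n + 1), ih]
    obtain ⟨m, rfl⟩ : ∃ m, n = m + 1 := ⟨n - 1, by omega⟩
    simp only [show m + 1 + 1 - 1 = m + 1 from rfl, show m + 1 + 1 - 2 = m from rfl,
      show m + 1 - 1 = m from rfl]
    rw [pow_succ]
    push_cast
    ring



/-- The function `g(b) = ∑_{k=1}^K (1-b)^{k-2}(1-kb) P(k)` (written via the product rule
as `(1-b)^{k-1} - b(k-1)(1-b)^{k-2}`, to which it is equal wherever defined) is
non-increasing on `[0,1]`, with `g(0) = ∑_{k=1}^K P(k)` and `g(1) = P(1) - P(2)` for `K ≥ 2`. -/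
theorem stp_derivative_monotone (K : ℕ) (hK : 1 ≤ K) (P : ℕ → ℝ)
    (hmono : ∀ k, 1 ≤ k → k < K → P (k + 1) ≤ P k)
    (hnonneg : ∀ k, 1 ≤ k → k ≤ K → 0 ≤ P k) (hP1 : 0 < P 1)
    (g : ℝ → ℝ)
    (hg : ∀ b : ℝ, g b = ∑ k ∈ Finset.Icc 1 K,
        ((1 - b) ^ (k - 1) - b * ((k : ℝ) - 1) * (1 - b) ^ (k - 2)) * P k) :
    AntitoneOn g (Set.Icc (0:ℝ) 1) ∧
      g 0 = ∑ k ∈ Finset.Icc 1 K, P k ∧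
      (2 ≤ K → g 1 = P 1 - P 2) := by
  refine ⟨?_, ?_, ?_⟩
  · intro x hx y hy hxy
    rw [hg x, hg y, key_identity x P K hK, key_identity y P K hK]
    have hx0 : (0:ℝ) ≤ 1 - y := by linarith [hy.2]
    have hxy' : 1 - y ≤ 1 - x := by linarith
    refine add_le_add ?_ ?_
    · apply mul_le_mul_of_nonneg_right _ (hnonneg K hK le_rfl)
      exact mul_le_mul_of_nonneg_left (pow_le_pow_left₀ hx0 hxy' _) (Nat.cast_nonneg K)
    · apply Finset.sum_le_sum
      intro k hk
      simp only [Finset.mem_Icc] at hk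
      have h1 : (0:ℝ) ≤ (k:ℝ) - 1 := by
        have : (2:ℝ) ≤ (k:ℝ) := by exact_mod_cast hk.1
        linarith
      have h2 : 0 ≤ P (k - 1) - P k := by
        have := hmono (k - 1) (by omega) (by omega)
        rw [show k - 1 + 1 = k from by omega] at this
        linarith
      have h3 : (1 - y) ^ (k - 2) ≤ (1 - x) ^ (k - 2) := pow_le_pow_left₀ hx0 hxy' _
      have h4 : (0:ℝ) ≤ (1 - y) ^ (k - 2) := pow_nonneg hx0 _
      calc ((k:ℝ) - 1) * (1 - y) ^ (k - 2) * (P (k - 1) - P k)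
          ≤ ((k:ℝ) - 1) * (1 - x) ^ (k - 2) * (P (k - 1) - P k) := by
            apply mul_le_mul_of_nonneg_right _ h2
            exact mul_le_mul_of_nonneg_left h3 h1
        _ = _ := rfl
  · rw [hg 0]
    simp
  · intro h2K
    rw [hg 1]
    have hsplit : Finset.Icc 1 K = Finset.Icc 1 2 ∪ Finset.Icc 3 K := by
      ext k; simp [Finset.mem_Icc, Finset.mem_union]; omega
    rw [hsplit, Finset.sum_union (by
      simp [Finset.disjoint_left, Finset.mem_Icc]; omega)]
    have h1 : ∑ k ∈ Finset.Icc 3 K,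
        ((1 - (1:ℝ)) ^ (k - 1) - 1 * ((k : ℝ) - 1) * (1 - 1) ^ (k - 2)) * P k = 0 := by
      apply Finset.sum_eq_zero
      intro k hk
      simp only [Finset.mem_Icc] at hk
      rw [sub_self, zero_pow (by omega : k - 1 ≠ 0), zero_pow (by omega : k - 2 ≠ 0)]
      ring
    rw [h1, show Finset.Icc 1 2 = {1, 2} from rfl]
    norm_num
    ring
end

section
/- For γ > 0 and 1 ≤ k ≤ K, arccot(K/(kγ)) = arctan(kγ/K), and the closed-form ZF coverage approximation P(k) = (1 + √(kγ/K) · arccot(K/(kγ)))^{-k} is non-increasing in k for fixed K and γ > 0. -/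
/-- For `γ > 0` and `1 ≤ k ≤ K`, `arccot(K/(kγ)) = arctan(kγ/K)` (with
`arccot x = π/2 - arctan x`), and the closed-form ZF coverage approximation
`P(k) = (1 + √(kγ/K) arccot(K/(kγ)))^{-k}` is non-increasing in `k`. -/
theorem zf_closed_form_monotone (K : ℕ) (hK : 1 ≤ K) (γ : ℝ) (hγ : 0 < γ)
    (P : ℕ → ℝ)
    (hP : ∀ k : ℕ, P k =
      ((1 + Real.sqrt ((k : ℝ) * γ / K) *
          (Real.pi / 2 - Real.arctan ((K : ℝ) / ((k : ℝ) * γ)))) ^ k)⁻¹) :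
    (∀ k : ℕ, 1 ≤ k → k ≤ K →
        Real.pi / 2 - Real.arctan ((K : ℝ) / ((k : ℝ) * γ))
          = Real.arctan ((k : ℝ) * γ / (K : ℝ))) ∧
      (∀ k, 1 ≤ k → k < K → P (k + 1) ≤ P k) := by
  have hK0 : (0 : ℝ) < K := by exact_mod_cast hK
  constructor
  · intro k hk _
    have hk0 : (0 : ℝ) < k := by exact_mod_cast hk
    have hx : (0 : ℝ) < (K : ℝ) / ((k : ℝ) * γ) := by positivity
    have h := Real.arctan_inv_of_pos hx
    rw [← h, inv_div]
  · intro k hk hkK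
    have hk0 : (0 : ℝ) < k := by exact_mod_cast hk
    have hk10 : (0 : ℝ) < (k : ℝ) + 1 := by linarith
    rw [hP, hP]
    set a := 1 + Real.sqrt ((k : ℝ) * γ / K) *
        (Real.pi / 2 - Real.arctan ((K : ℝ) / ((k : ℝ) * γ))) with ha
    set b := 1 + Real.sqrt (((k + 1 : ℕ) : ℝ) * γ / K) *
        (Real.pi / 2 - Real.arctan ((K : ℝ) / (((k + 1 : ℕ) : ℝ) * γ))) with hb
    have hcast : ((k + 1 : ℕ) : ℝ) = (k : ℝ) + 1 := by push_cast; ring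
    have harc1 : Real.arctan ((K : ℝ) / ((k : ℝ) * γ)) < Real.pi / 2 :=
      Real.arctan_lt_pi_div_two _
    have harc2 : Real.arctan ((K : ℝ) / (((k + 1 : ℕ) : ℝ) * γ)) < Real.pi / 2 :=
      Real.arctan_lt_pi_div_two _
    have hsq1 : 0 ≤ Real.sqrt ((k : ℝ) * γ / K) := Real.sqrt_nonneg _
    have hsq2 : 0 ≤ Real.sqrt (((k + 1 : ℕ) : ℝ) * γ / K) := Real.sqrt_nonneg _
    have h1a : 1 ≤ a := by
      have : 0 ≤ Real.sqrt ((k : ℝ) * γ / K) *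
          (Real.pi / 2 - Real.arctan ((K : ℝ) / ((k : ℝ) * γ))) :=
        mul_nonneg hsq1 (by linarith)
      rw [ha]; linarith [this]
    have hab : a ≤ b := by
      have hsqle : Real.sqrt ((k : ℝ) * γ / K) ≤ Real.sqrt (((k + 1 : ℕ) : ℝ) * γ / K) := by
        apply Real.sqrt_le_sqrt
        rw [hcast]
        have : (k : ℝ) * γ ≤ ((k : ℝ) + 1) * γ := by nlinarith
        exact div_le_div_of_nonneg_right this hK0.le
      have harcle : Real.arctan ((K : ℝ) / (((k + 1 : ℕ) : ℝ) * γ)) ≤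
          Real.arctan ((K : ℝ) / ((k : ℝ) * γ)) := by
        apply Real.arctan_strictMono.monotone
        rw [hcast]
        apply div_le_div_of_nonneg_left (le_of_lt hK0) (by positivity)
        nlinarith
      have h2 : 0 ≤ Real.pi / 2 - Real.arctan ((K : ℝ) / ((k : ℝ) * γ)) := by linarith
      have := mul_le_mul hsqle (by linarith : Real.pi / 2 -
          Real.arctan ((K : ℝ) / ((k : ℝ) * γ)) ≤
          Real.pi / 2 - Real.arctan ((K : ℝ) / (((k + 1 : ℕ) : ℝ) * γ))) h2 hsq2
      rw [ha, hb]; linarith [this]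
    have hpow : a ^ k ≤ b ^ (k + 1) := by
      calc a ^ k ≤ b ^ k := pow_le_pow_left₀ (by linarith) hab k
        _ ≤ b ^ (k + 1) := pow_le_pow_right₀ (by linarith) (Nat.le_succ k)
    have hapos : 0 < a ^ k := pow_pos (by linarith) k
    exact inv_anti₀ hapos hpow
end
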